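/- Let R ⊆ ℤ^d be a set of ℤ^d-Bohr recurrence. Then there exists a permutation φ of {1,…,d} such that the set R'' = {(n_{φ(1)},…,n_{φ(d)}) : n ∈ R and |n_{φ(1)}| ≥ |n_{φ(2)}| ≥ … ≥ |n_{φ(d)}|} is an ordered set of ℤ^d-Bohr recurrence; moreover, if R is essential then R'' is essential. -/

import Mathlib

open scoped BigOperators

noncomputable section

/-- Distance from a real number to the nearest integer. -/
def torusNorm (x : ℝ) : ℝ := |x - round x|

/-- A subset `V ⊆ ℤ^d` is a Bohr₀ set if there are `k ≥ 1`, vectors `α₁, …, α_k ∈ ℝ^d`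
and `ε > 0` such that every `n ∈ ℤ^d` with `‖n·αⱼ‖_𝕋 < ε` for all `j` belongs to `V`. -/
def IsBohr0 (d : ℕ) (V : Set (Fin d → ℤ)) : Prop :=
  ∃ k : ℕ, 1 ≤ k ∧ ∃ α : Fin k → Fin d → ℝ, ∃ ε : ℝ, 0 < ε ∧
    ∀ n : Fin d → ℤ, (∀ j : Fin k, torusNorm (∑ i, (n i : ℝ) * α j i) < ε) → n ∈ V

/-- `R ⊆ ℤ^d` is a set of `ℤ^d`-Bohr recurrence if it meets every Bohr₀ set. -/
def IsBohrRecurrence (d : ℕ) (R : Set (Fin d → ℤ)) : Prop :=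
  ∀ V : Set (Fin d → ℤ), IsBohr0 d V → (R ∩ V).Nonempty

/-- `R` is essential: every element has all coordinates nonzero. -/
def IsEssential {d : ℕ} (R : Set (Fin d → ℤ)) : Prop :=
  ∀ n ∈ R, ∀ i, n i ≠ 0

/-- `R` is ordered: every `n ∈ R` satisfies `|n₁| ≥ |n₂| ≥ … ≥ |n_d|`. -/
def IsOrderedSet {d : ℕ} (R : Set (Fin d → ℤ)) : Prop :=
  ∀ n ∈ R, ∀ i j : Fin d, i ≤ j → |n j| ≤ |n i|

lemma bohr0_univ (d : ℕ) : IsBohr0 d Set.univ :=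
  ⟨1, le_refl 1, fun _ _ => 0, 1, one_pos, fun n _ => Set.mem_univ n⟩

lemma bohr0_inter {d : ℕ} {V W : Set (Fin d → ℤ)} (hV : IsBohr0 d V) (hW : IsBohr0 d W) :
    IsBohr0 d (V ∩ W) := by
  obtain ⟨k1, hk1, a1, e1, he1, h1⟩ := hV
  obtain ⟨k2, hk2, a2, e2, he2, h2⟩ := hW
  refine ⟨k1 + k2, le_add_right hk1, Fin.append a1 a2, min e1 e2, lt_min he1 he2, ?_⟩
  intro n hn
  constructor
  · apply h1; intro j
    have := hn (Fin.castAdd k2 j)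
    simp only [Fin.append_left] at this
    exact lt_of_lt_of_le this (min_le_left _ _)
  · apply h2; intro j
    have := hn (Fin.natAdd k1 j)
    simp only [Fin.append_right] at this
    exact lt_of_lt_of_le this (min_le_right _ _)

lemma bohr0_biInter {d : ℕ} {ι : Type*} [DecidableEq ι] (s : Finset ι)
    (V : ι → Set (Fin d → ℤ)) (h : ∀ i ∈ s, IsBohr0 d (V i)) :
    IsBohr0 d (⋂ i ∈ s, V i) := by
  induction s using Finset.induction_on with
  | empty => simpa using bohr0_univ d
  | insert _ _ hx ih =>
      rw [Finset.set_biInter_insert]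
      exact bohr0_inter (h _ (Finset.mem_insert_self _ _))
        (ih fun i hi => h i (Finset.mem_insert_of_mem hi))

lemma bohr0_perm {d : ℕ} (φ : Equiv.Perm (Fin d)) {V : Set (Fin d → ℤ)}
    (hV : IsBohr0 d V) : IsBohr0 d {n | n ∘ ⇑φ ∈ V} := by
  obtain ⟨k, hk, a, e, he, h⟩ := hV
  refine ⟨k, hk, fun j => a j ∘ ⇑φ.symm, e, he, ?_⟩
  intro n hn
  apply h
  intro j
  have key : (∑ i, ((n ∘ ⇑φ) i : ℝ) * a j i) = ∑ i, (n i : ℝ) * (a j ∘ ⇑φ.symm) i := by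
    rw [← Equiv.sum_comp φ (fun i => (n i : ℝ) * (a j ∘ ⇑φ.symm) i)]
    simp
  rw [key]
  exact hn j

/-- Any set of `ℤ^d`-Bohr recurrence can be turned into an ordered one by permuting
coordinates and restricting to the elements whose permuted coordinates are ordered;
essentiality is preserved. -/
theorem reduction_to_ordered_bohr_recurrence
    (d : ℕ) (R : Set (Fin d → ℤ)) (hR : IsBohrRecurrence d R) :
    ∃ φ : Equiv.Perm (Fin d),
      IsBohrRecurrence d
        {m : Fin d → ℤ | ∃ n ∈ R,
          (∀ i j : Fin d, i ≤ j → |n (φ j)| ≤ |n (φ i)|) ∧ m = n ∘ ⇑φ} ∧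
      IsOrderedSet
        {m : Fin d → ℤ | ∃ n ∈ R,
          (∀ i j : Fin d, i ≤ j → |n (φ j)| ≤ |n (φ i)|) ∧ m = n ∘ ⇑φ} ∧
      (IsEssential R →
        IsEssential
          {m : Fin d → ℤ | ∃ n ∈ R,
            (∀ i j : Fin d, i ≤ j → |n (φ j)| ≤ |n (φ i)|) ∧ m = n ∘ ⇑φ}) := by
  classical
  set S : Equiv.Perm (Fin d) → Set (Fin d → ℤ) := fun φ =>
    {m : Fin d → ℤ | ∃ n ∈ R,
      (∀ i j : Fin d, i ≤ j → |n (φ j)| ≤ |n (φ i)|) ∧ m = n ∘ ⇑φ} with hS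
  have hrec : ∃ φ, IsBohrRecurrence d (S φ) := by
    by_contra hcon
    push_neg at hcon
    have hch : ∀ φ : Equiv.Perm (Fin d), ∃ V : Set (Fin d → ℤ),
        IsBohr0 d V ∧ (S φ ∩ V) = ∅ := by
      intro φ
      simp only [IsBohrRecurrence, not_forall] at hcon
      obtain ⟨V, hV, hVe⟩ := hcon φ
      exact ⟨V, hV, Set.not_nonempty_iff_eq_empty.mp hVe⟩
    choose V hV hVe using hch
    -- the pulled-back intersection is Bohr₀
    have hW : IsBohr0 d (⋂ φ ∈ (Finset.univ : Finset (Equiv.Perm (Fin d))),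
        {n : Fin d → ℤ | n ∘ ⇑φ ∈ V φ}) :=
      bohr0_biInter _ _ (fun φ _ => bohr0_perm φ (hV φ))
    obtain ⟨n, hnR, hnW⟩ := hR _ hW
    -- sort the coordinates of n
    set σ : Equiv.Perm (Fin d) := Tuple.sort (fun i => -|n i|) with hσ
    have hmono : Monotone ((fun i => -|n i|) ∘ ⇑σ) := Tuple.monotone_sort _
    have hord : ∀ i j : Fin d, i ≤ j → |n (σ j)| ≤ |n (σ i)| := by
      intro i j hij
      have := hmono hij
      simp only [Function.comp_apply] at this
      linarith
    have hmem : n ∘ ⇑σ ∈ S σ := ⟨n, hnR, hord, rfl⟩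
    have hmemV : n ∘ ⇑σ ∈ V σ := by
      have := Set.mem_iInter₂.mp hnW σ (Finset.mem_univ σ)
      exact this
    have : (n ∘ ⇑σ) ∈ S σ ∩ V σ := ⟨hmem, hmemV⟩
    rw [hVe σ] at this
    exact this
  obtain ⟨φ, hφ⟩ := hrec
  refine ⟨φ, hφ, ?_, ?_⟩
  · rintro m ⟨n, _, hord, rfl⟩ i j hij
    exact hord i j hij
  · rintro hess m ⟨n, hn, _, rfl⟩ i
    exact hess n hn (φ i)
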